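/- Let a, b ∈ ℚ with a ≠ 0 and f_n(x) = (1/a)((ax+b)^n − b). Then: (1) every f_n is monic iff a = 1; (2) all f_n have integer coefficients iff a, b ∈ ℤ and a ∣ b(b−1). -/

import Mathlib

open Polynomial

lemma coeff_aux (a b : ℚ) (ha : a ≠ 0) (n i : ℕ) :
    ((C a * X + C b) ^ n).coeff i = (n.choose i : ℚ) * a ^ i * b ^ (n - i) := by
  have h : C a * X + C b = C a * (X + C (b / a)) := by
    rw [mul_add, ← C_mul]; field_simp
  rw [h, mul_pow, ← C_pow, coeff_C_mul, coeff_X_add_C_pow]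
  rcases le_or_gt i n with hin | hin
  · have hpow : a ^ n = a ^ i * a ^ (n - i) := by
      rw [← pow_add, Nat.add_sub_cancel' hin]
    rw [hpow, div_pow]
    field_simp
  · simp [Nat.choose_eq_zero_of_lt hin]

lemma dvd_pow_sub (c : ℤ) : ∀ n : ℕ, 1 ≤ n → (c ^ 2 - c) ∣ (c ^ n - c) := by
  intro n hn
  induction n with
  | zero => omega
  | succ m ih =>
    rcases Nat.eq_or_lt_of_le hn with h1 | h1
    · simp [← h1]
    · have hm : 1 ≤ m := by omega
      obtain ⟨w, hw⟩ := ih hm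
      refine ⟨c * w + 1, ?_⟩
      have : c ^ (m + 1) - c = c * (c ^ m - c) + (c ^ 2 - c) := by ring
      rw [this, hw]; ring

theorem monomial_chain_monic_int (a b : ℚ) (ha : a ≠ 0)
    (f : ℕ → ℚ[X])
    (hf : ∀ j : ℕ, f j = C a⁻¹ * ((C a * X + C b) ^ j - C b)) :
    ((∀ n : ℕ, 1 ≤ n → (f n).Monic) ↔ a = 1) ∧
    ((∀ n : ℕ, 1 ≤ n → ∀ i : ℕ, ∃ z : ℤ, (f n).coeff i = (z : ℚ)) ↔
      (∃ za : ℤ, a = (za : ℚ)) ∧ (∃ zb : ℤ, b = (zb : ℚ)) ∧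
        (∃ z : ℤ, b * (b - 1) / a = (z : ℚ))) := by
  have key : ∀ n i : ℕ, (f n).coeff i =
      a⁻¹ * ((n.choose i : ℚ) * a ^ i * b ^ (n - i) - if i = 0 then b else 0) := by
    intro n i
    rw [hf, coeff_C_mul, coeff_sub, coeff_aux a b ha, coeff_C]
  constructor
  · constructor
    · intro h
      have h2 := h 2 (by norm_num)
      -- natDegree of f 2 is 2
      have hc2 : (f 2).coeff 2 = a := by
        rw [key]; field_simp; simp
      have hle : (f 2).natDegree ≤ 2 := by
        apply natDegree_le_iff_coeff_eq_zero.mpr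
        intro i hi
        have h0 : (2 : ℕ).choose i = 0 := Nat.choose_eq_zero_of_lt hi
        rw [key, h0, if_neg (by omega : i ≠ 0)]
        simp
      have hge : 2 ≤ (f 2).natDegree := le_natDegree_of_ne_zero (by rw [hc2]; exact ha)
      have hdeg : (f 2).natDegree = 2 := le_antisymm hle hge
      have := h2.coeff_natDegree
      rw [hdeg, hc2] at this
      exact this
    · intro h1 n hn
      subst h1
      have hfn : f n = (X + C b) ^ n + (-C b) := by
        rw [hf]; simp [sub_eq_add_neg]
      rw [hfn]
      apply Monic.add_of_left
      · exact (monic_X_add_C b).pow n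
      · have hdp : ((X + C b) ^ n).degree = (n : WithBot ℕ) := by
          rw [degree_pow, degree_X_add_C]; simp
        rw [hdp]
        have hle0 : (-C b).degree ≤ 0 := (degree_neg (C b)).le.trans degree_C_le
        refine lt_of_le_of_lt hle0 ?_
        exact_mod_cast (by omega : 0 < n)
  · constructor
    · intro h
      have c22 : (f 2).coeff 2 = a := by
        rw [key]; field_simp; simp
      have c21 : (f 2).coeff 1 = 2 * b := by
        rw [key]; norm_num; field_simp
      have c31 : (f 3).coeff 1 = 3 * b ^ 2 := by
        rw [key]; norm_num; field_simp
      have c20 : (f 2).coeff 0 = b * (b - 1) / a := by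
        rw [key]; norm_num; field_simp
      obtain ⟨za, hza⟩ := h 2 (by norm_num) 2
      have hza' : a = (za : ℚ) := by rw [← c22]; exact hza
      obtain ⟨k, hk⟩ := h 2 (by norm_num) 1
      have hk' : 2 * b = (k : ℚ) := by rw [← c21]; exact hk
      obtain ⟨m, hm⟩ := h 3 (by norm_num) 1
      have hm' : 3 * b ^ 2 = (m : ℚ) := by rw [← c31]; exact hm
      obtain ⟨z, hz⟩ := h 2 (by norm_num) 0
      have hz' : b * (b - 1) / a = (z : ℚ) := by rw [← c20]; exact hz
      refine ⟨⟨za, hza'⟩, ?_, ⟨z, hz'⟩⟩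
      -- show b is an integer from 2b = k and 3b² = m
      have h3k : 3 * k ^ 2 = 4 * m := by
        have : (3 : ℚ) * (k : ℚ) ^ 2 = 4 * (m : ℚ) := by
          rw [← hk', ← hm']; ring
        exact_mod_cast this
      have hkeven : ∃ t : ℤ, k = 2 * t := by
        rcases Int.even_or_odd k with ⟨t, ht⟩ | ⟨t, ht⟩
        · exact ⟨t, by omega⟩
        · exfalso
          have hs : 12 * (t * t) + 12 * t + 3 = 4 * m := by
            rw [ht] at h3k; ring_nf at h3k ⊢; linarith
          omega
      obtain ⟨t, ht⟩ := hkeven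
      refine ⟨t, ?_⟩
      have : (2 : ℚ) * b = 2 * (t : ℚ) := by rw [hk', ht]; push_cast; ring
      linarith
    · rintro ⟨⟨za, hza⟩, ⟨zb, hzb⟩, ⟨z, hz⟩⟩
      intro n hn i
      have hzb2 : zb ^ 2 - zb = za * z := by
        have : (zb : ℚ) ^ 2 - zb = za * z := by
          rw [← hza, ← hzb]
          field_simp at hz
          nlinarith [hz]
        exact_mod_cast this
      rcases Nat.eq_zero_or_pos i with hi0 | hipos
      · subst hi0
        have hw := dvd_pow_sub zb n hn
        obtain ⟨w', hw'⟩ : za ∣ zb ^ n - zb := dvd_trans ⟨z, hzb2⟩ hw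
        refine ⟨w', ?_⟩
        rw [key]
        simp only [eq_self_iff_true, if_true, Nat.choose_zero_right, Nat.cast_one,
          pow_zero, Nat.sub_zero, one_mul]
        have hbn : b ^ n - b = a * (w' : ℚ) := by
          rw [hza, hzb]; exact_mod_cast hw'
        rw [hbn, inv_mul_cancel_left₀ ha]
      · refine ⟨(n.choose i : ℤ) * za ^ (i - 1) * zb ^ (n - i), ?_⟩
        rw [key]
        have hii : i = (i - 1) + 1 := by omega
        rw [if_neg (by omega), sub_zero, hza, hzb]
        push_cast
        rw [hii]
        have hza0 : (za : ℚ) ≠ 0 := by rw [← hza]; exact ha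
        field_simp
        ring_nf
        simp
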